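/- Let D ≥ 16, Q = ln ln D, 0 < ε < 1, and suppose (γ_n) is a sequence of reals with counting bound #{n : |γ_n| ≤ T} ≤ K·(ln D)·T·ln(T+2) for all T ≥ 1, and φ : ℝ → ℂ satisfies |φ(r)| ≤ C_A (Q·dist(r, [a,b]))^{-A} for all r with dist(r,[a,b]) ≥ Q^{-1+ε} and every A ≥ 3. Then ∑_{dist(γ_n, [a,b]) ≥ Q^{-1+ε}} |φ(γ_n)| ≤ C'·(ln D)·Q^{-2}, with C' depending only on K, the C_A, a, b, ε. -/

import Mathlib

open Real Set Metric


lemma abs_le_add_infDist (a b x : ℝ) (hab : a ≤ b) :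
    |x| ≤ max |a| |b| + Metric.infDist x (Icc a b) := by
  by_contra h
  push_neg at h
  have hne : (Icc a b).Nonempty := ⟨a, left_mem_Icc.2 hab⟩
  have hlt : Metric.infDist x (Icc a b) < |x| - max |a| |b| := by linarith
  obtain ⟨y, hy, hxy⟩ := (Metric.infDist_lt_iff hne).1 hlt
  have hy' : |y| ≤ max |a| |b| := by
    rw [abs_le]
    constructor
    · have := neg_abs_le a
      have := le_max_left |a| |b|
      linarith [hy.1]
    · have := le_abs_self b
      have := le_max_right |a| |b|
      linarith [hy.2]
  have h1 : |x| - |y| ≤ dist x y := by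
    rw [Real.dist_eq]
    exact abs_sub_abs_le_abs_sub x y
  linarith

lemma one_le_loglog {D : ℝ} (hD : 16 ≤ D) : 1 ≤ Real.log (Real.log D) := by
  have h2 : Real.exp 1 ≤ Real.log D := by
    have h16 : Real.exp 1 ≤ Real.log 16 := by
      have : Real.log 16 = 4 * Real.log 2 := by
        rw [show (16:ℝ) = 2 ^ (4:ℕ) by norm_num, Real.log_pow]
        norm_num
      rw [this]
      nlinarith [Real.exp_one_lt_d9, Real.log_two_gt_d9]
    exact h16.trans (Real.log_le_log (by norm_num) hD)
  calc (1:ℝ) = Real.log (Real.exp 1) := (Real.log_exp 1).symm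
    _ ≤ Real.log (Real.log D) := Real.log_le_log (Real.exp_pos 1) h2

set_option maxHeartbeats 1000000 in
/-- Tail estimate for the smoothed counting sum: with `D ≥ 16`, `Q = ln ln D`,
`0 < ε < 1`, a sequence `(γ_n)` satisfying the counting bound
`#{n : |γ_n| ≤ T} ≤ K (ln D) T ln(T+2)` for `T ≥ 1`, and `φ` satisfying
`|φ(r)| ≤ C_A (Q·dist(r,[a,b]))^{-A}` for all `A ≥ 3` whenever
`dist(r,[a,b]) ≥ Q^{-1+ε}`, one has
`∑_{dist(γ_n,[a,b]) ≥ Q^{-1+ε}} |φ(γ_n)| ≤ C' (ln D) Q^{-2}`, with `C'` depending only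
on `K`, the `C_A`, `a`, `b`, `ε`. -/
theorem stmt_18 (K : ℝ) (hK : 0 < K) (Cf : ℝ → ℝ) (a b : ℝ) (hab : a ≤ b)
    (ε : ℝ) (hε₀ : 0 < ε) (hε₁ : ε < 1) :
    ∃ C' : ℝ, 0 < C' ∧
      ∀ (D : ℝ), 16 ≤ D → ∀ Q : ℝ, Q = Real.log (Real.log D) →
        ∀ (γ : ℕ → ℝ) (φ : ℝ → ℂ),
          (∀ T : ℝ, 1 ≤ T → {n : ℕ | |γ n| ≤ T}.Finite ∧
            (Nat.card {n : ℕ | |γ n| ≤ T} : ℝ) ≤ K * Real.log D * T * Real.log (T + 2)) →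
          (∀ A : ℝ, 3 ≤ A → ∀ r : ℝ, Q ^ (-1 + ε) ≤ Metric.infDist r (Icc a b) →
            ‖φ r‖ ≤ Cf A * (Q * Metric.infDist r (Icc a b)) ^ (-A)) →
          (∑' n : ℕ,
              if Q ^ (-1 + ε) ≤ Metric.infDist (γ n) (Icc a b) then ‖φ (γ n)‖ else 0) ≤
            C' * Real.log D * Q ^ (-2 : ℝ) := by
  set M : ℝ := max |a| |b| with hM
  have hM0 : 0 ≤ M := le_max_iff.2 (Or.inl (abs_nonneg a))
  set A : ℝ := max 3 (2 / ε) with hA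
  have hA3 : 3 ≤ A := le_max_left _ _
  have hεA : 2 ≤ ε * A := by
    have := mul_le_mul_of_nonneg_left (le_max_right 3 (2 / ε)) hε₀.le
    rwa [mul_div_cancel₀ 2 hε₀.ne'] at this
  set C₀ : ℝ := max (Cf A) 1 with hC₀
  have hC₀1 : 1 ≤ C₀ := le_max_right _ _
  have hC₀0 : 0 < C₀ := lt_of_lt_of_le one_pos hC₀1
  refine ⟨4 * K * C₀ * (M + 2) ^ 2, by positivity, ?_⟩
  intro D hD Q hQ γ φ hcount hφ
  have hQ1 : 1 ≤ Q := hQ ▸ one_le_loglog hD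
  have hQ0 : 0 < Q := lt_of_lt_of_le one_pos hQ1
  have hlogD0 : 0 < Real.log D := Real.log_pos (by linarith)
  set δ : ℝ := Q ^ (-1 + ε) with hδ
  have hδ0 : 0 < δ := Real.rpow_pos_of_pos hQ0 _
  have hδ1 : δ ≤ 1 := Real.rpow_le_one_of_one_le_of_nonpos hQ1 (by linarith)
  set d : ℕ → ℝ := fun n => Metric.infDist (γ n) (Icc a b) with hdd
  have hd0 : ∀ n, 0 ≤ d n := fun n => Metric.infDist_nonneg
  set f : ℕ → ℝ := fun n => if δ ≤ d n then ‖φ (γ n)‖ else 0 with hf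
  have hf0 : ∀ n, 0 ≤ f n := by
    intro n; simp only [hf]; split
    · exact norm_nonneg _
    · exact le_refl 0
  have hQ2 : 0 < Q ^ (-2 : ℝ) := Real.rpow_pos_of_pos hQ0 _
  -- per-shell term bound
  have term_bound : ∀ (k : ℕ) (n : ℕ), δ * 2 ^ k ≤ d n →
      f n ≤ C₀ * Q ^ (-2 : ℝ) * ((2 : ℝ) ^ k) ^ (-(3 : ℝ)) := by
    intro k n hkn
    have h2k1 : (1:ℝ) ≤ 2 ^ k := by calc (1:ℝ) = 1 ^ k := (one_pow k).symm
      _ ≤ 2 ^ k := pow_le_pow_left₀ (by norm_num) (by norm_num) k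
    have h2k0 : (0:ℝ) < 2 ^ k := by positivity
    have hδd : δ ≤ d n := le_trans (by nlinarith) hkn
    have hdn0 : 0 < d n := hδ0.trans_le hδd
    have hQd0 : 0 < Q * d n := mul_pos hQ0 hdn0
    have hf_eq : f n = ‖φ (γ n)‖ := if_pos hδd
    have hb := hφ A hA3 (γ n) hδd
    have hrpow0 : 0 ≤ (Q * d n) ^ (-A) := (Real.rpow_pos_of_pos hQd0 _).le
    have hb2 : ‖φ (γ n)‖ ≤ C₀ * (Q * d n) ^ (-A) :=
      hb.trans (mul_le_mul_of_nonneg_right (le_max_left _ _) hrpow0)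
    have hQδ : Q * δ = Q ^ ε := by
      rw [hδ]
      calc Q * Q ^ (-1 + ε) = Q ^ (1:ℝ) * Q ^ (-1 + ε) := by rw [Real.rpow_one]
        _ = Q ^ (1 + (-1 + ε)) := (Real.rpow_add hQ0 _ _).symm
        _ = Q ^ ε := by norm_num
    have hQε0 : 0 < Q ^ ε := Real.rpow_pos_of_pos hQ0 _
    have hbase : Q ^ ε * 2 ^ k ≤ Q * d n := by
      calc Q ^ ε * 2 ^ k = Q * δ * 2 ^ k := by rw [hQδ]
        _ = Q * (δ * 2 ^ k) := by ring
        _ ≤ Q * d n := mul_le_mul_of_nonneg_left hkn hQ0.le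
    have h1 : (Q * d n) ^ (-A) ≤ (Q ^ ε * 2 ^ k) ^ (-A) :=
      Real.rpow_le_rpow_of_nonpos (by positivity) hbase (by linarith)
    have h2 : (Q ^ ε * 2 ^ k : ℝ) ^ (-A) = (Q ^ ε) ^ (-A) * ((2:ℝ) ^ k) ^ (-A) :=
      Real.mul_rpow hQε0.le h2k0.le
    have h3 : (Q ^ ε) ^ (-A) ≤ Q ^ (-2:ℝ) := by
      rw [← Real.rpow_mul hQ0.le]
      exact Real.rpow_le_rpow_of_exponent_le hQ1 (by nlinarith)
    have h4 : ((2:ℝ) ^ k) ^ (-A) ≤ ((2:ℝ) ^ k) ^ (-(3:ℝ)) :=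
      Real.rpow_le_rpow_of_exponent_le h2k1 (by linarith)
    calc f n = ‖φ (γ n)‖ := hf_eq
      _ ≤ C₀ * (Q * d n) ^ (-A) := hb2
      _ ≤ C₀ * ((Q ^ ε) ^ (-A) * ((2:ℝ) ^ k) ^ (-A)) := by
          rw [← h2]; exact mul_le_mul_of_nonneg_left h1 hC₀0.le
      _ ≤ C₀ * (Q ^ (-2:ℝ) * ((2:ℝ) ^ k) ^ (-(3:ℝ))) := by
          have hm := mul_le_mul h3 h4 (Real.rpow_pos_of_pos h2k0 _).le hQ2.le
          exact mul_le_mul_of_nonneg_left hm hC₀0.le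
      _ = C₀ * Q ^ (-2:ℝ) * ((2:ℝ) ^ k) ^ (-(3:ℝ)) := by ring
  -- membership in the counting set
  have mem_bound : ∀ (k : ℕ) (n : ℕ), d n < δ * 2 ^ (k + 1) →
      |γ n| ≤ M + 2 ^ (k + 1) := by
    intro k n hn
    have h1 : |γ n| ≤ M + d n := abs_le_add_infDist a b (γ n) hab
    have h2 : δ * 2 ^ (k+1) ≤ 2 ^ (k+1) := by
      nlinarith [pow_pos (by norm_num : (0:ℝ) < 2) (k+1)]
    linarith
  -- ENNReal machinery
  set G : ℕ → ℕ → ENNReal := fun k n =>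
    if δ * 2 ^ k ≤ d n ∧ d n < δ * 2 ^ (k + 1) then ENNReal.ofReal (f n) else 0 with hG
  have step_n : ∀ n, ENNReal.ofReal (f n) ≤ ∑' k, G k n := by
    intro n
    by_cases hn : δ ≤ d n
    · have hx1 : 1 ≤ d n / δ := (one_le_div hδ0).2 hn
      obtain ⟨k, hk1, hk2⟩ := exists_nat_pow_near hx1 (one_lt_two)
      have hP : δ * 2 ^ k ≤ d n ∧ d n < δ * 2 ^ (k + 1) := by
        constructor
        · rw [mul_comm]
          exact (le_div_iff₀ hδ0).1 hk1
        · rw [mul_comm]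
          exact (div_lt_iff₀ hδ0).1 hk2
      have hGk : G k n = ENNReal.ofReal (f n) := if_pos hP
      exact hGk ▸ ENNReal.le_tsum k
    · have : f n = 0 := if_neg hn
      simp [this]
  set β : ℝ := 2 * K * C₀ * (M + 2) ^ 2 * Real.log D * Q ^ (-2:ℝ) with hβ
  have hβ0 : 0 ≤ β := by positivity
  have shell_bound : ∀ k : ℕ, (∑' n, G k n) ≤ ENNReal.ofReal (β * (1/2:ℝ) ^ k) := by
    intro k
    have h2k1 : (1:ℝ) ≤ 2 ^ k := by calc (1:ℝ) = 1 ^ k := (one_pow k).symm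
      _ ≤ 2 ^ k := pow_le_pow_left₀ (by norm_num) (by norm_num) k
    have h2k0 : (0:ℝ) < 2 ^ k := by positivity
    set T : ℝ := M + 2 ^ (k + 1) with hT
    have h2k1' : (2:ℝ) ^ (k+1) = 2 * 2 ^ k := by rw [pow_succ]; ring
    have hT1 : 1 ≤ T := by rw [hT, h2k1']; nlinarith
    have hT0 : 0 < T := lt_of_lt_of_le one_pos hT1
    obtain ⟨hfin, hcard⟩ := hcount T hT1
    set c : ℝ := C₀ * Q ^ (-2:ℝ) * ((2:ℝ) ^ k) ^ (-(3:ℝ)) with hc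
    have hc0 : 0 ≤ c := by
      have := (Real.rpow_pos_of_pos h2k0 (-(3:ℝ))).le
      positivity
    have hpt : ∀ n, G k n ≤
        Set.indicator {n : ℕ | |γ n| ≤ T} (fun _ => ENNReal.ofReal c) n := by
      intro n
      by_cases hP : δ * 2 ^ k ≤ d n ∧ d n < δ * 2 ^ (k + 1)
      · have hmem : n ∈ {n : ℕ | |γ n| ≤ T} := mem_bound k n hP.2
        rw [Set.indicator_of_mem hmem]
        have : G k n = ENNReal.ofReal (f n) := if_pos hP
        rw [this]
        exact ENNReal.ofReal_le_ofReal (term_bound k n hP.1)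
      · have : G k n = 0 := if_neg hP
        rw [this]
        exact zero_le
    have h1 : (∑' n, G k n) ≤
        ∑' n, Set.indicator {n : ℕ | |γ n| ≤ T} (fun _ => ENNReal.ofReal c) n :=
      ENNReal.tsum_le_tsum hpt
    have h2 : ∑' n, Set.indicator {n : ℕ | |γ n| ≤ T} (fun _ => ENNReal.ofReal c) n
        = (hfin.toFinset.card : ENNReal) * ENNReal.ofReal c := by
      rw [tsum_eq_sum (s := hfin.toFinset)
        (fun n hn => Set.indicator_of_notMem (fun h => hn (hfin.mem_toFinset.2 h)) _)]
      rw [Finset.sum_congr rfl (fun n hn => Set.indicator_of_mem (hfin.mem_toFinset.1 hn) _),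
        Finset.sum_const, nsmul_eq_mul]
    -- real-number card bound
    have hcardR : (hfin.toFinset.card : ℝ) ≤ 2 * K * Real.log D * T ^ 2 := by
      have hcc : (Nat.card {n : ℕ | |γ n| ≤ T} : ℝ) = (hfin.toFinset.card : ℝ) := by
        rw [Nat.card_eq_card_finite_toFinset hfin]
      have hlog : Real.log (T + 2) ≤ 2 * T := by
        have := Real.log_le_sub_one_of_pos (by linarith : (0:ℝ) < T + 2)
        linarith
      have h5 : K * Real.log D * T * Real.log (T + 2) ≤ K * Real.log D * T * (2 * T) :=
        mul_le_mul_of_nonneg_left hlog (by positivity)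
      calc (hfin.toFinset.card : ℝ) ≤ K * Real.log D * T * Real.log (T + 2) := by
            rw [← hcc]; exact hcard
        _ ≤ K * Real.log D * T * (2 * T) := h5
        _ = 2 * K * Real.log D * T ^ 2 := by ring
    have hTle : T ≤ (M + 2) * 2 ^ k := by
      have h9 : M ≤ M * 2 ^ k := le_mul_of_one_le_right hM0 h2k1
      have h10 : (M + 2) * (2:ℝ) ^ k = M * 2 ^ k + 2 * 2 ^ k := by ring
      rw [hT, h2k1']
      linarith
    have hmain : (hfin.toFinset.card : ℝ) * c ≤ β * (1/2:ℝ) ^ k := by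
      have hx3 : ((2:ℝ) ^ k) ^ (-(3:ℝ)) = (((2:ℝ) ^ k) ^ (3:ℕ))⁻¹ := by
        rw [Real.rpow_neg h2k0.le]
        rw [show (3:ℝ) = ((3:ℕ):ℝ) by norm_num, Real.rpow_natCast]
      have hT2 : T ^ 2 ≤ (M + 2) ^ 2 * ((2:ℝ) ^ k) ^ 2 := by
        rw [← mul_pow]
        exact pow_le_pow_left₀ hT0.le hTle 2
      have hhalf : ((2:ℝ) ^ k) ^ 2 * (((2:ℝ) ^ k) ^ (3:ℕ))⁻¹ = (1/2:ℝ) ^ k := by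
        rw [one_div, inv_pow]
        field_simp
      calc (hfin.toFinset.card : ℝ) * c
          ≤ (2 * K * Real.log D * T ^ 2) * c := mul_le_mul_of_nonneg_right hcardR hc0
        _ ≤ (2 * K * Real.log D * ((M + 2) ^ 2 * ((2:ℝ) ^ k) ^ 2)) * c := by
            apply mul_le_mul_of_nonneg_right _ hc0
            apply mul_le_mul_of_nonneg_left hT2 (by positivity)
        _ = β * (((2:ℝ) ^ k) ^ 2 * (((2:ℝ) ^ k) ^ (3:ℕ))⁻¹) := by
            rw [hc, hx3, hβ]; ring
        _ = β * (1/2:ℝ) ^ k := by rw [hhalf]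
    calc (∑' n, G k n) ≤ (hfin.toFinset.card : ENNReal) * ENNReal.ofReal c := h1.trans_eq h2
      _ = ENNReal.ofReal ((hfin.toFinset.card : ℝ) * c) := by
          rw [← ENNReal.ofReal_natCast hfin.toFinset.card,
            ← ENNReal.ofReal_mul (by positivity)]
      _ ≤ ENNReal.ofReal (β * (1/2:ℝ) ^ k) := ENNReal.ofReal_le_ofReal hmain
  -- assemble
  set R : ℝ := 4 * K * C₀ * (M + 2) ^ 2 * Real.log D * Q ^ (-2:ℝ) with hR
  have hR0 : 0 ≤ R := by positivity
  have key : (∑' n, ENNReal.ofReal (f n)) ≤ ENNReal.ofReal R := by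
    calc (∑' n, ENNReal.ofReal (f n)) ≤ ∑' n, ∑' k, G k n := ENNReal.tsum_le_tsum step_n
      _ = ∑' k, ∑' n, G k n := ENNReal.tsum_comm
      _ ≤ ∑' k, ENNReal.ofReal (β * (1/2:ℝ) ^ k) := ENNReal.tsum_le_tsum shell_bound
      _ = ENNReal.ofReal β * ∑' k : ℕ, (ENNReal.ofReal (1/2:ℝ)) ^ k := by
          simp_rw [ENNReal.ofReal_mul hβ0, ENNReal.ofReal_pow (by norm_num : (0:ℝ) ≤ 1/2)]
          rw [ENNReal.tsum_mul_left]
      _ = ENNReal.ofReal β * 2 := by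
          have : ENNReal.ofReal (1/2:ℝ) = 2⁻¹ := by
            rw [one_div, ENNReal.ofReal_inv_of_pos (by norm_num)]
            norm_num
          rw [this, ENNReal.tsum_geometric, ENNReal.one_sub_inv_two, inv_inv]
      _ = ENNReal.ofReal R := by
          rw [show (2 : ENNReal) = ENNReal.ofReal (2:ℝ) by norm_num,
            ← ENNReal.ofReal_mul hβ0]
          congr 1
          rw [hβ, hR]; ring
  have hgoal : (∑' n, f n) ≤ R := by
    by_cases hs : Summable f
    · rw [← ENNReal.ofReal_tsum_of_nonneg hf0 hs] at key
      exact (ENNReal.ofReal_le_ofReal_iff hR0).1 key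
    · rw [tsum_eq_zero_of_not_summable hs]
      exact hR0
  calc (∑' n : ℕ, if δ ≤ d n then ‖φ (γ n)‖ else 0) = ∑' n, f n := by rfl
    _ ≤ R := hgoal
    _ = 4 * K * C₀ * (M + 2) ^ 2 * Real.log D * Q ^ (-2:ℝ) := by rw [hR]
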